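/- arXiv:0910.1923 — 2 statements merged into one kernel-verified Lean document; each statement's English description precedes it below -/
import Mathlib

section
/- Let X₁, …, X_d be affinely independent points in ℤ^d with |X_i^j| ≤ m for all i, j, and let H be the affine hull of {X₁, …, X_d}. If H does not contain the origin O, then the Euclidean distance from O to H is at least (2m√d)^{-(d-1)}. -/
open scoped RealInnerProductSpace

/-- Hadamard's determinant inequality (column version). -/
lemma hadamard_det {d : ℕ} (f : Fin d → EuclideanSpace ℝ (Fin d)) :
    |(Matrix.of fun i j => f j i).det| ≤ ∏ j, ‖f j‖ := by
  have hcard : Module.finrank ℝ (EuclideanSpace ℝ (Fin d)) = Fintype.card (Fin d) := by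
    simp [finrank_euclideanSpace]
  haveI : WellFoundedLT (Fin d) := inferInstance
  have hdet := InnerProductSpace.gramSchmidtOrthonormalBasis_det (𝕜 := ℝ) (f := f) hcard
  set b := InnerProductSpace.gramSchmidtOrthonormalBasis (𝕜 := ℝ) (f := f) hcard with hb
  set e := EuclideanSpace.basisFun (Fin d) ℝ with he
  have hmat : e.toBasis.toMatrix f = Matrix.of fun i j => f j i := by
    ext i j
    simp [Module.Basis.toMatrix_apply, e, EuclideanSpace.basisFun_repr]
  have hsplit : e.toBasis.det f = e.toBasis.det b.toBasis * b.toBasis.det f := by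
    rw [Module.Basis.det_apply, Module.Basis.det_apply, Module.Basis.det_apply,
      ← Module.Basis.toMatrix_mul_toMatrix e.toBasis b.toBasis f, Matrix.det_mul]
  have h1 : |e.toBasis.det b.toBasis| = 1 := by
    rw [show (⇑b.toBasis : Fin d → EuclideanSpace ℝ (Fin d)) = ⇑b from b.coe_toBasis]
    rcases e.det_to_matrix_orthonormalBasis_real b with h | h <;> rw [h] <;> norm_num
  have habs : |(Matrix.of fun i j => f j i).det| = |b.toBasis.det f| := by
    rw [← hmat, ← Module.Basis.det_apply, hsplit, abs_mul, h1, one_mul]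
  rw [habs, hdet, Finset.abs_prod]
  refine Finset.prod_le_prod (fun i _ => abs_nonneg _) (fun i _ => ?_)
  refine le_trans (abs_real_inner_le_norm (b i) (f i)) ?_
  rw [b.orthonormal.1 i, one_mul]

/-- Euclidean norm bound from coordinatewise bounds. -/
lemma euclid_norm_le {d : ℕ} (x : EuclideanSpace ℝ (Fin d)) (c : ℝ) (hc : 0 ≤ c)
    (h : ∀ i, |x i| ≤ c) : ‖x‖ ≤ Real.sqrt d * c := by
  rw [EuclideanSpace.norm_eq]
  have h1 : ∑ i, ‖x i‖ ^ 2 ≤ (d : ℝ) * c ^ 2 := by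
    calc ∑ i, ‖x i‖ ^ 2 ≤ ∑ _i : Fin d, c ^ 2 :=
          Finset.sum_le_sum fun i _ => by
            rw [Real.norm_eq_abs]
            exact pow_le_pow_left₀ (abs_nonneg _) (h i) 2
      _ = (d : ℝ) * c ^ 2 := by simp [Finset.sum_const, mul_comm]
  calc Real.sqrt (∑ i, ‖x i‖ ^ 2) ≤ Real.sqrt ((d : ℝ) * c ^ 2) := Real.sqrt_le_sqrt h1
    _ = Real.sqrt d * c := by
        rw [Real.sqrt_mul (by positivity), Real.sqrt_sq hc]

lemma euclid_norm_le' {n : ℕ} (x : EuclideanSpace ℝ (Fin (n + 1))) (c : ℝ) (hc : 0 ≤ c)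
    (h : ∀ i, |x i| ≤ c) : ‖x‖ ≤ Real.sqrt ((n : ℝ) + 1) * c := by
  have h1 := euclid_norm_le x c hc h
  rwa [show ((n + 1 : ℕ) : ℝ) = (n : ℝ) + 1 by push_cast; ring] at h1

/-- Schürmann's lattice bound: if `X₁, …, X_d` are affinely independent integer points in
`ℤ^d` (here `d = n+1`) with all coordinates bounded by `m`, and their affine hull `H` does
not contain the origin, then the distance from the origin to `H` is at least
`(2m√d)^{-(d-1)}`. -/
theorem stmt1 (n : ℕ) (m : ℕ) (hm : 0 < m) (X : Fin (n + 1) → (Fin (n + 1) → ℤ))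
    (hbound : ∀ i j, |X i j| ≤ (m : ℤ))
    (Y : Fin (n + 1) → EuclideanSpace ℝ (Fin (n + 1)))
    (hY : ∀ i j, Y i j = (X i j : ℝ))
    (hindep : AffineIndependent ℝ Y)
    (hO : (0 : EuclideanSpace ℝ (Fin (n + 1))) ∉
      (affineSpan ℝ (Set.range Y) : Set (EuclideanSpace ℝ (Fin (n + 1))))) :
    Metric.infDist (0 : EuclideanSpace ℝ (Fin (n + 1)))
        (affineSpan ℝ (Set.range Y) : Set (EuclideanSpace ℝ (Fin (n + 1)))) ≥
      1 / (2 * m * Real.sqrt (n + 1)) ^ n := by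
  -- the points are linearly independent
  have hli : LinearIndependent ℝ Y := by
    rw [Fintype.linearIndependent_iff]
    intro g hg
    by_cases hs : ∑ j, g j = 0
    · exact fun i => affineIndependent_iff.mp hindep Finset.univ g hs hg i (Finset.mem_univ i)
    · exfalso
      apply hO
      have hw : ∑ j, (∑ k, g k)⁻¹ * g j = 1 := by
        rw [← Finset.mul_sum, inv_mul_cancel₀ hs]
      have hmem := affineCombination_mem_affineSpan (k := ℝ) hw Y
      rw [Finset.univ.affineCombination_eq_linear_combination Y _ hw] at hmem
      have hzero : ∑ i, ((∑ k, g k)⁻¹ * g i) • Y i = 0 := by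
        simp_rw [mul_smul, ← Finset.smul_sum, hg, smul_zero]
      rwa [hzero] at hmem
  -- the real matrix of the points
  set N : Matrix (Fin (n + 1)) (Fin (n + 1)) ℤ := Matrix.of X with hN
  set M : Matrix (Fin (n + 1)) (Fin (n + 1)) ℝ := Matrix.of fun i j => (X i j : ℝ) with hM
  have hMunit : IsUnit M := by
    rw [← Matrix.linearIndependent_rows_iff_isUnit]
    have hYM : (fun i => (Y i).ofLp) = (fun i => M i) := funext fun i => funext fun j => hY i j
    show LinearIndependent ℝ (fun i => M i)
    rw [← hYM]
    exact hli.map' (WithLp.linearEquiv 2 ℝ (Fin (n + 1) → ℝ)).toLinearMap (LinearEquiv.ker _)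
  have hMdet : M.det ≠ 0 := by
    intro h
    rw [Matrix.isUnit_iff_isUnit_det, h] at hMunit
    exact (not_isUnit_zero : ¬ IsUnit (0 : ℝ)) hMunit
  -- the determinant is a nonzero integer, hence of absolute value ≥ 1
  have hcast : M.det = ((N.det : ℤ) : ℝ) :=
    (RingHom.map_det (Int.castRingHom ℝ) N).symm
  have hdet1 : (1 : ℝ) ≤ |M.det| := by
    have hz : N.det ≠ 0 := by
      intro h
      rw [hcast, h] at hMdet
      exact hMdet (by norm_num)
    rw [hcast, ← Int.cast_abs]
    exact_mod_cast Int.one_le_abs hz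
  -- the normal vector u
  set u : Fin (n + 1) → ℝ := (M.det)⁻¹ • M.cramer (fun _ => 1) with hu
  have hMu : M.mulVec u = fun _ => 1 := by
    rw [hu, Matrix.mulVec_smul, Matrix.mulVec_cramer, smul_smul,
      inv_mul_cancel₀ hMdet, one_smul]
  set uE : EuclideanSpace ℝ (Fin (n + 1)) := (WithLp.equiv 2 (Fin (n + 1) → ℝ)).symm u with huE
  have hYu : ∀ i, ⟪Y i, uE⟫ = 1 := by
    intro i
    have hsum : (⟪Y i, uE⟫ : ℝ) = M.mulVec u i := by
      simp [huE, PiLp.inner_apply, RCLike.inner_apply, Matrix.mulVec, dotProduct,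
        hY, hM, WithLp.equiv_symm_apply, mul_comm]
    rw [hsum, hMu]
  -- bound the norm of u
  have hsd : (0:ℝ) ≤ Real.sqrt (n + 1) := Real.sqrt_nonneg _
  have hm1 : (1:ℝ) ≤ (m:ℝ) := by exact_mod_cast hm
  have hcol : ∀ j, |u j| ≤ Real.sqrt (n + 1) * (Real.sqrt (n + 1) * m) ^ n := by
    intro j
    have h1 : |u j| ≤ |M.cramer (fun _ => 1) j| := by
      rw [hu, Pi.smul_apply, smul_eq_mul, abs_mul, abs_inv]
      calc |M.det|⁻¹ * |M.cramer (fun _ => 1) j|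
          ≤ 1 * |M.cramer (fun _ => 1) j| := by
            apply mul_le_mul_of_nonneg_right _ (abs_nonneg _)
            exact inv_le_one_of_one_le₀ hdet1
        _ = _ := one_mul _
    have h2 : |M.cramer (fun _ => 1) j| ≤
        Real.sqrt (n + 1) * (Real.sqrt (n + 1) * m) ^ n := by
      rw [Matrix.cramer_apply]
      set B := M.updateCol j (fun _ => 1) with hB
      set f : Fin (n + 1) → EuclideanSpace ℝ (Fin (n + 1)) := fun k => WithLp.toLp 2 (fun i => B i k) with hf
      have hBf : B = Matrix.of fun i k => f k i := rfl
      have hHad := hadamard_det f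
      rw [← hBf] at hHad
      refine le_trans hHad ?_
      have hnormj : ‖f j‖ ≤ Real.sqrt ((n : ℝ) + 1) * 1 := by
        apply euclid_norm_le' _ _ zero_le_one
        intro i
        simp [hf, hB, Matrix.updateCol_apply]
      have hnormk : ∀ k, k ≠ j → ‖f k‖ ≤ Real.sqrt ((n : ℝ) + 1) * m := by
        intro k hk
        apply euclid_norm_le' _ _ (by positivity)
        intro i
        simp only [hf, hB, PiLp.toLp_apply, Matrix.updateCol_apply, if_neg hk]
        rw [hM]
        have hb := hbound i k
        simp only [Matrix.of_apply]
        rw [← Int.cast_abs]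
        exact_mod_cast hb
      calc ∏ k, ‖f k‖ = ‖f j‖ * ∏ k ∈ Finset.univ.erase j, ‖f k‖ :=
            (Finset.mul_prod_erase Finset.univ _ (Finset.mem_univ j)).symm
        _ ≤ (Real.sqrt ((n : ℝ) + 1) * 1) *
              ∏ _k ∈ Finset.univ.erase j, (Real.sqrt ((n : ℝ) + 1) * m) := by
            apply mul_le_mul hnormj _ (Finset.prod_nonneg fun k _ => norm_nonneg _) (by positivity)
            exact Finset.prod_le_prod (fun k _ => norm_nonneg _)
              (fun k hk => hnormk k (Finset.ne_of_mem_erase hk))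
        _ = Real.sqrt ((n : ℝ) + 1) * (Real.sqrt ((n : ℝ) + 1) * m) ^ n := by
            rw [Finset.prod_const, Finset.card_erase_of_mem (Finset.mem_univ j),
              Finset.card_univ, Fintype.card_fin]
            simp
    exact h1.trans h2
  have hnormu : ‖uE‖ ≤ (2 * m * Real.sqrt (n + 1)) ^ n := by
    have h1 : ‖uE‖ ≤ Real.sqrt ((n : ℝ) + 1) *
        (Real.sqrt ((n : ℝ) + 1) * (Real.sqrt ((n : ℝ) + 1) * m) ^ n) := by
      refine euclid_norm_le' uE _ (by positivity) fun i => ?_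
      rw [huE, WithLp.equiv_symm_apply]
      exact hcol i
    have h2 : Real.sqrt ((n : ℝ) + 1) * (Real.sqrt ((n : ℝ) + 1) *
        (Real.sqrt ((n : ℝ) + 1) * m) ^ n)
        = ((n : ℝ) + 1) * (Real.sqrt ((n : ℝ) + 1) * m) ^ n := by
      rw [← mul_assoc, Real.mul_self_sqrt (by positivity)]
    have h3 : ((n : ℝ) + 1) ≤ 2 ^ n := by
      have h4 : n < 2 ^ n := Nat.lt_two_pow_self
      exact_mod_cast Nat.succ_le_of_lt h4
    calc ‖uE‖ ≤ ((n : ℝ) + 1) * (Real.sqrt ((n : ℝ) + 1) * m) ^ n := by rw [← h2]; exact h1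
      _ ≤ 2 ^ n * (Real.sqrt ((n : ℝ) + 1) * m) ^ n := by
          apply mul_le_mul_of_nonneg_right h3 (by positivity)
      _ = (2 * m * Real.sqrt ((n : ℝ) + 1)) ^ n := by
          rw [← mul_pow]; ring_nf
  -- every point of the affine span has norm at least 1/C
  have hCpos : (0:ℝ) < (2 * m * Real.sqrt (n + 1)) ^ n := by positivity
  have hpoint : ∀ y ∈ (affineSpan ℝ (Set.range Y) :
      Set (EuclideanSpace ℝ (Fin (n + 1)))), 1 / (2 * m * Real.sqrt (n + 1)) ^ n ≤ ‖y‖ := by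
    intro y hy
    obtain ⟨w, hw, rfl⟩ := eq_affineCombination_of_mem_affineSpan_of_fintype hy
    rw [Finset.univ.affineCombination_eq_linear_combination Y w hw]
    have hinner : ⟪∑ i, w i • Y i, uE⟫ = 1 := by
      rw [sum_inner]
      simp_rw [real_inner_smul_left, hYu, mul_one]
      exact hw
    have h1 : (1:ℝ) ≤ ‖∑ i, w i • Y i‖ * (2 * m * Real.sqrt (n + 1)) ^ n := by
      calc (1:ℝ) = |⟪∑ i, w i • Y i, uE⟫| := by rw [hinner]; norm_num
        _ ≤ ‖∑ i, w i • Y i‖ * ‖uE‖ := abs_real_inner_le_norm _ uE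
        _ ≤ _ := mul_le_mul_of_nonneg_left hnormu (norm_nonneg _)
    rw [div_le_iff₀ hCpos]
    linarith
  rw [ge_iff_le]
  refine le_of_not_gt fun hlt => ?_
  have hne : (affineSpan ℝ (Set.range Y) :
      Set (EuclideanSpace ℝ (Fin (n + 1)))).Nonempty :=
    ⟨Y 0, mem_affineSpan ℝ (Set.mem_range_self 0)⟩
  obtain ⟨y, hy, hdy⟩ := (Metric.infDist_lt_iff hne).mp hlt
  rw [dist_zero_left] at hdy
  exact absurd hdy (not_lt.mpr (hpoint y hy))
end

section
/- Let S ⊆ ℝ^d be finite and p ∈ conv(S). A subset A ⊆ S is minimal (under inclusion) with the property p ∈ conv(A) if and only if the subsystem {x · (q − p) > 0 : q ∈ A} is an irreducible infeasible subsystem, i.e., it is infeasible but every proper subsystem is feasible. -/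
open scoped RealInnerProductSpace

lemma key_farkas (d : ℕ) (A : Finset (EuclideanSpace ℝ (Fin d)))
    (p : EuclideanSpace ℝ (Fin d)) :
    p ∈ convexHull ℝ (A : Set (EuclideanSpace ℝ (Fin d))) ↔
      ¬ ∃ x : EuclideanSpace ℝ (Fin d), ∀ q ∈ A, 0 < ⟪x, q - p⟫ := by
  constructor
  · rintro hp ⟨x, hx⟩
    have hconv : Convex ℝ {y : EuclideanSpace ℝ (Fin d) | ⟪x, p⟫ < ⟪x, y⟫} :=
      convex_halfSpace_gt ⟨fun a b => inner_add_right x a b,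
        fun c a => real_inner_smul_right x a c⟩ _
    have hsub : (A : Set (EuclideanSpace ℝ (Fin d))) ⊆
        {y | ⟪x, p⟫ < ⟪x, y⟫} := by
      intro q hq
      have := hx q hq
      rw [inner_sub_right] at this
      show ⟪x, p⟫ < ⟪x, q⟫
      linarith
    have := convexHull_min hsub hconv hp
    simp at this
  · intro h
    by_contra hp
    apply h
    have hclosed : IsClosed (convexHull ℝ (A : Set (EuclideanSpace ℝ (Fin d)))) :=
      (A.finite_toSet.isCompact_convexHull ℝ).isClosed
    obtain ⟨f, u, hfp, hfb⟩ := geometric_hahn_banach_point_closed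
      (convex_convexHull ℝ _) hclosed hp
    refine ⟨(InnerProductSpace.toDual ℝ (EuclideanSpace ℝ (Fin d))).symm f, fun q hq => ?_⟩
    have hq' : f p < f q := lt_trans hfp (hfb q (subset_convexHull ℝ _ hq))
    rw [inner_sub_right]
    simpa [InnerProductSpace.toDual_symm_apply] using sub_pos.mpr hq'

/-- For `S ⊆ ℝ^d` finite and `p ∈ conv(S)`: a subset `A ⊆ S` is inclusion-minimal with
`p ∈ conv(A)` if and only if the subsystem `{x · (q − p) > 0 : q ∈ A}` is an irreducible
infeasible subsystem (infeasible, but every proper subsystem feasible). -/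
theorem stmt8 (d : ℕ) (S : Finset (EuclideanSpace ℝ (Fin d)))
    (p : EuclideanSpace ℝ (Fin d))
    (hp : p ∈ convexHull ℝ (S : Set (EuclideanSpace ℝ (Fin d))))
    (A : Finset (EuclideanSpace ℝ (Fin d))) (hA : A ⊆ S) :
    (p ∈ convexHull ℝ (A : Set (EuclideanSpace ℝ (Fin d))) ∧
        ∀ B ⊂ A, p ∉ convexHull ℝ (B : Set (EuclideanSpace ℝ (Fin d)))) ↔
      ((¬ ∃ x : EuclideanSpace ℝ (Fin d), ∀ q ∈ A, 0 < ⟪x, q - p⟫) ∧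
        ∀ B ⊂ A, ∃ x : EuclideanSpace ℝ (Fin d), ∀ q ∈ B, 0 < ⟪x, q - p⟫) := by
  constructor
  · rintro ⟨h1, h2⟩
    exact ⟨(key_farkas d A p).mp h1,
      fun B hB => not_not.mp (fun hc => h2 B hB ((key_farkas d B p).mpr hc))⟩
  · rintro ⟨h1, h2⟩
    exact ⟨(key_farkas d A p).mpr h1,
      fun B hB hc => (key_farkas d B p).mp hc ⟨_, fun q hq => ((h2 B hB).choose_spec q hq)⟩⟩
end
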